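/- Let f, g : [0,1] → ℕ̄ be lower semicontinuous. Suppose that for every t ∈ [0,1] there exist an open neighborhood U of t in [0,1] and c ∈ ℕ with f(s) ≤ c ≤ g(s) for all s ∈ U, and suppose that g is not a constant function with finite value (i.e. there is no n ∈ ℕ with g(t) = n for all t). Then there exist a continuous function g̃ : [0,1] → ℝ and a nonempty open subset V ⊆ [0,1] such that f(t) ≤ g̃(t) ≤ g(t) for all t ∈ [0,1] and g̃(t) < g(t) for all t ∈ V. -/
import Mathlib


open scoped ENNReal

/-- The canonical order embedding of `ℕ∞ = ℕ ∪ {∞}` into the extended reals,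
used to compare `ℕ∞`-valued functions with real-valued functions:
`f t ≤ (g̃ t : EReal)` says that `f t` is a finite natural number whose real coercion
is at most `g̃ t`, and `(g̃ t : EReal) ≤ g t` (resp. `<`) is interpreted with `∞`
dominating every real number. -/
noncomputable def ENat.toEReal (a : ℕ∞) : EReal := ((a : ℝ≥0∞) : EReal)

open Set

lemma toEReal_natCast (n : ℕ) : ENat.toEReal (n:ℕ∞) = ((n:ℝ):EReal) := by
  simp only [ENat.toEReal, ENat.toENNReal_coe]
  rw [← ENNReal.ofReal_natCast, EReal.coe_ennreal_ofReal,
    max_eq_left (by positivity : (0:ℝ) ≤ (n:ℝ))]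

lemma toEReal_top : (⊤ : ℕ∞).toEReal = ⊤ := by simp [ENat.toEReal]

lemma toEReal_lt {n : ℕ} {a : ℕ∞} (h : (n:ℕ∞) < a) : ((n:ℝ):EReal) < a.toEReal := by
  rw [← toEReal_natCast]
  exact EReal.coe_ennreal_lt_coe_ennreal_iff.2 (by exact_mod_cast h)

lemma step1 (f g : Set.Icc (0:ℝ) 1 → ℕ∞)
    (hloc : ∀ t : Set.Icc (0:ℝ) 1, ∃ U : Set (Set.Icc (0:ℝ) 1), IsOpen U ∧ t ∈ U ∧
      ∃ c : ℕ, ∀ s ∈ U, f s ≤ (c : ℕ∞) ∧ (c : ℕ∞) ≤ g s)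
    (hnc : ¬ ∃ n : ℕ, ∀ t, g t = (n : ℕ∞)) :
    ∃ (t₀ : Set.Icc (0:ℝ) 1) (W : Set (Set.Icc (0:ℝ) 1)) (c₀ : ℕ),
      IsOpen W ∧ t₀ ∈ W ∧ (∀ s ∈ W, f s ≤ (c₀:ℕ∞) ∧ (c₀:ℕ∞) ≤ g s) ∧ (c₀:ℕ∞) < g t₀ := by
  by_contra h
  push_neg at h
  have hval : ∀ t : Set.Icc (0:ℝ) 1, ∃ c : ℕ, ∃ U, IsOpen U ∧ t ∈ U ∧ ∀ s ∈ U, g s = (c:ℕ∞) := by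
    intro t
    obtain ⟨U, hU, htU, c, hc⟩ := hloc t
    exact ⟨c, U, hU, htU, fun s hs => le_antisymm (h s U c hU hs hc) (hc s hs).2⟩
  have hlc : IsLocallyConstant g := by
    rw [IsLocallyConstant.iff_exists_open]
    intro t
    obtain ⟨c, U, hU, htU, hc⟩ := hval t
    exact ⟨U, hU, htU, fun t' ht' => by rw [hc t' ht', hc t htU]⟩
  have t1 : Set.Icc (0:ℝ) 1 := ⟨0, by norm_num⟩
  obtain ⟨c, U, hU, htU, hc⟩ := hval t1
  exact hnc ⟨c, fun t => by rw [hlc.apply_eq_of_preconnectedSpace t t1, hc t1 htU]⟩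

/-- Let `f, g : [0,1] → ℕ∞` be lower semicontinuous satisfying the local
interpolation condition, and suppose `g` is not a constant function with finite value.
Then there are a continuous `g̃ : [0,1] → ℝ` and a nonempty open `V ⊆ [0,1]` such that
`f ≤ g̃ ≤ g` everywhere and `g̃ < g` on `V`. -/
theorem stmt_6 (f g : Set.Icc (0:ℝ) 1 → ℕ∞)
    (hf : LowerSemicontinuous f) (hg : LowerSemicontinuous g)
    (hloc : ∀ t : Set.Icc (0:ℝ) 1, ∃ U : Set (Set.Icc (0:ℝ) 1), IsOpen U ∧ t ∈ U ∧
      ∃ c : ℕ, ∀ s ∈ U, f s ≤ (c : ℕ∞) ∧ (c : ℕ∞) ≤ g s)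
    (hnc : ¬ ∃ n : ℕ, ∀ t, g t = (n : ℕ∞)) :
    ∃ (g' : Set.Icc (0:ℝ) 1 → ℝ) (V : Set (Set.Icc (0:ℝ) 1)),
      Continuous g' ∧ IsOpen V ∧ V.Nonempty ∧
      (∀ t, (f t).toEReal ≤ (g' t : EReal) ∧ (g' t : EReal) ≤ (g t).toEReal) ∧
      (∀ t ∈ V, (g' t : EReal) < (g t).toEReal) := by
  classical
  obtain ⟨t₀, W, c₀, hWo, ht₀W, hWc, hlt⟩ := step1 f g hloc hnc
  obtain ⟨K, hKn, hKc, hKW⟩ := exists_mem_nhds_isClosed_subset (hWo.mem_nhds ht₀W)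
  choose U hUo hUm c hU using hloc
  let Uf : Option (Set.Icc (0:ℝ) 1) → Set (Set.Icc (0:ℝ) 1) :=
    fun i => i.elim W (fun t => U t \ K)
  let cf : Option (Set.Icc (0:ℝ) 1) → ℕ := fun i => i.elim c₀ c
  have hUfo : ∀ i, IsOpen (Uf i) := by
    rintro (_|t)
    · exact hWo
    · exact (hUo t).sdiff hKc
  have hUfc : ∀ i, ∀ s ∈ Uf i, f s ≤ (cf i:ℕ∞) ∧ (cf i:ℕ∞) ≤ g s := by
    rintro (_|t) s hs
    · exact hWc s hs
    · exact hU t s hs.1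
  have hcov : (univ : Set (Set.Icc (0:ℝ) 1)) ⊆ ⋃ i, Uf i := by
    intro s _
    by_cases hs : s ∈ K
    · exact mem_iUnion.2 ⟨none, hKW hs⟩
    · exact mem_iUnion.2 ⟨some s, ⟨hUm s, hs⟩⟩
  obtain ⟨I, hI⟩ := isCompact_univ.elim_finite_subcover Uf hUfo hcov
  set I' : Finset (Option (Set.Icc (0:ℝ) 1)) := insert none I with hI'def
  have hcov' : (univ : Set (Set.Icc (0:ℝ) 1)) ⊆ ⋃ i : I', Uf i := by
    refine hI.trans (iUnion₂_subset fun i hi => ?_)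
    exact subset_iUnion (fun j : I' => Uf j) ⟨i, Finset.mem_insert_of_mem hi⟩
  obtain ⟨φ, hφ⟩ := PartitionOfUnity.exists_isSubordinate isClosed_univ
    (fun i : I' => Uf i) (fun i => hUfo i) hcov'
  set g' : Set.Icc (0:ℝ) 1 → ℝ := fun t => ∑ i : I', (φ i) t * (cf i : ℝ) with hg'def
  have hcont : Continuous g' :=
    continuous_finset_sum Finset.univ (fun i _ => ((φ i).continuous).mul continuous_const)
  have hsum : ∀ t, ∑ i : I', (φ i) t = 1 := by
    intro t
    rw [← finsum_eq_sum_of_fintype]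
    exact φ.sum_eq_one (mem_univ t)
  have hactive : ∀ (t) (i : I'), (φ i) t ≠ 0 →
      f t ≤ (cf i:ℕ∞) ∧ (cf i:ℕ∞) ≤ g t := fun t i hi =>
    hUfc i t (hφ i (subset_tsupport _ hi))
  -- pointwise bounds
  have hbounds : ∀ t, (f t).toEReal ≤ (g' t : EReal) ∧ (g' t : EReal) ≤ (g t).toEReal := by
    intro t
    obtain ⟨i₁, hi₁⟩ : ∃ i : I', (φ i) t ≠ 0 := by
      by_contra hno
      push_neg at hno
      have := hsum t
      rw [Finset.sum_eq_zero (fun i _ => hno i)] at this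
      norm_num at this
    have hft : f t ≠ ⊤ := by
      intro h
      have := (hactive t i₁ hi₁).1
      rw [h] at this
      simp at this
    obtain ⟨n, hn⟩ : ∃ n : ℕ, f t = (n : ℕ∞) := by
      rcases WithTop.ne_top_iff_exists.1 hft with ⟨n, hn⟩
      exact ⟨n, by exact_mod_cast hn.symm⟩
    constructor
    · rw [hn, toEReal_natCast, EReal.coe_le_coe_iff]
      calc (n:ℝ) = ∑ i : I', (φ i) t * n := by rw [← Finset.sum_mul, hsum t, one_mul]
        _ ≤ ∑ i : I', (φ i) t * cf i := by
            refine Finset.sum_le_sum fun i _ => ?_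
            by_cases hz : (φ i) t = 0
            · simp [hz]
            · refine mul_le_mul_of_nonneg_left ?_ (φ.nonneg i t)
              have := (hactive t i hz).1
              rw [hn] at this
              exact_mod_cast this
    · rcases eq_or_ne (g t) ⊤ with hgt | hgt
      · rw [hgt, toEReal_top]; exact le_top
      obtain ⟨m, hm⟩ : ∃ m : ℕ, g t = (m : ℕ∞) := by
        rcases WithTop.ne_top_iff_exists.1 hgt with ⟨m, hm⟩
        exact ⟨m, by exact_mod_cast hm.symm⟩
      rw [hm, toEReal_natCast, EReal.coe_le_coe_iff]
      calc g' t ≤ ∑ i : I', (φ i) t * m := by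
            refine Finset.sum_le_sum fun i _ => ?_
            by_cases hz : (φ i) t = 0
            · simp [hz]
            · refine mul_le_mul_of_nonneg_left ?_ (φ.nonneg i t)
              have := (hactive t i hz).2
              rw [hm] at this
              exact_mod_cast this
        _ = m := by rw [← Finset.sum_mul, hsum t, one_mul]
  -- the strict set
  have hi₀mem : none ∈ I' := Finset.mem_insert_self _ _
  set i₀ : I' := ⟨none, hi₀mem⟩ with hi₀def
  have hVopen : IsOpen {s | (c₀:ℕ∞) < g s} := hg.isOpen_preimage c₀
  refine ⟨g', interior K ∩ {s | (c₀:ℕ∞) < g s}, hcont, isOpen_interior.inter hVopen,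
    ⟨t₀, mem_interior_iff_mem_nhds.2 hKn, hlt⟩, hbounds, ?_⟩
  intro s hs
  have hz : ∀ i : I', i ≠ i₀ → (φ i) s = 0 := by
    rintro ⟨i, hi⟩ hne
    match i with
    | none => exact absurd (Subtype.ext rfl) hne
    | some t =>
      have hnm : s ∉ tsupport (φ ⟨some t, hi⟩) := by
        intro hmem
        exact (hφ ⟨some t, hi⟩ hmem).2 (interior_subset hs.1)
      exact image_eq_zero_of_notMem_tsupport hnm
  have hone : (φ i₀) s = 1 := by
    have h1 := hsum s
    rwa [Finset.sum_eq_single i₀ (fun i _ hne => hz i hne)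
      (fun h => absurd (Finset.mem_univ i₀) h)] at h1
  have hgs : g' s = ((c₀ : ℕ) : ℝ) := by
    show (∑ i : I', (φ i) s * (cf i : ℝ)) = ((c₀ : ℕ) : ℝ)
    rw [Finset.sum_eq_single i₀ (fun i _ hne => by rw [hz i hne, zero_mul])
      (fun h => absurd (Finset.mem_univ i₀) h), hone, one_mul]
    rfl
  rw [hgs]
  exact toEReal_lt hs.2
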